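/- arXiv:1106.0165 — 2 statements merged into one kernel-verified Lean document; each statement's English description precedes it below -/
import Mathlib

section
/- In the setting of BEKK matrices, if the spectral radius of Σ_{i=1}^q A_i + Σ_{j=1}^p B_j is less than 1, then the spectral radius of Σ_{j=1}^p B_j is also less than 1. -/
open Matrix Kronecker

/-- Index set for the lower triangular part (including the diagonal) of a `d × d` matrix. -/
def VechIdx (d : ℕ) := {p : Fin d × Fin d // p.2 ≤ p.1}

instance (d : ℕ) : Fintype (VechIdx d) := Subtype.fintype _
instance (d : ℕ) : DecidableEq (VechIdx d) := Subtype.instDecidableEq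

/-- The `vec` of a matrix, as a vector indexed by pairs of indices. -/
def matVec {d : ℕ} (M : Matrix (Fin d) (Fin d) ℝ) : Fin d × Fin d → ℝ :=
  fun p => M p.1 p.2

/-- The `vech` of a matrix: its lower triangular part (including the diagonal). -/
def matVech {d : ℕ} (M : Matrix (Fin d) (Fin d) ℝ) : VechIdx d → ℝ :=
  fun p => M p.1.1 p.1.2

section Aux

open Filter Topology

attribute [local instance] Matrix.linftyOpSemiNormedRing Matrix.linftyOpNormedRing
  Matrix.linftyOpNormedAlgebra

variable {n' : Type*} [Fintype n'] [DecidableEq n']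

/-- sum of matrices acting on a vector -/
lemma bekk_sum_mulVec {ι : Type*} (s : Finset ι) (M : ι → Matrix n' n' ℝ) (v : n' → ℝ) :
    (∑ i ∈ s, M i) *ᵥ v = ∑ i ∈ s, (M i) *ᵥ v := by
  ext j
  simp only [mulVec, dotProduct, Matrix.sum_apply, Finset.sum_mul, Finset.sum_apply]
  rw [Finset.sum_comm]

lemma bekk_kron_mulVec {d : ℕ} (A B X : Matrix (Fin d) (Fin d) ℝ) :
    (A ⊗ₖ B) *ᵥ matVec X = matVec (A * X * Bᵀ) := by
  ext ⟨i, j⟩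
  simp only [mulVec, dotProduct, matVec, Fintype.sum_prod_type, kroneckerMap_apply,
    Matrix.mul_apply, transpose_apply]
  rw [Finset.sum_comm]
  refine Finset.sum_congr rfl fun l _ => ?_
  rw [Finset.sum_mul]
  refine Finset.sum_congr rfl fun k _ => ?_
  ring

lemma bekk_quad_add (M : Matrix n' n' ℝ) (i j : n') :
    (Pi.single i 1 + Pi.single j 1) ⬝ᵥ M *ᵥ (Pi.single i 1 + Pi.single j 1)
      = M i i + M i j + M j i + M j j := by
  simp [dotProduct, mulVec, Pi.single_apply, add_mul, mul_add, Finset.sum_add_distrib,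
    ite_mul, mul_ite, Finset.sum_ite_eq, Finset.sum_ite_eq']
  ring

lemma bekk_quad_sub (M : Matrix n' n' ℝ) (i j : n') :
    (Pi.single i 1 - Pi.single j 1) ⬝ᵥ M *ᵥ (Pi.single i 1 - Pi.single j 1)
      = M i i - M i j - M j i + M j j := by
  simp [dotProduct, mulVec, Pi.single_apply, sub_mul, mul_sub, Finset.sum_sub_distrib,
    ite_mul, mul_ite, Finset.sum_ite_eq, Finset.sum_ite_eq']
  ring

/-- entry bound from a Loewner sandwich -/
lemma bekk_entry_bound {Z W : Matrix n' n' ℝ} (hZ : Zᵀ = Z)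
    (h1 : (W - Z).PosSemidef) (h2 : (W + Z).PosSemidef) (i j : n') :
    |Z i j| ≤ (W i i + W j j) / 2 := by
  have hZsym : Z j i = Z i j := (congrFun (congrFun hZ j) i).symm
  have q1 := h1.dotProduct_mulVec_nonneg (Pi.single i 1 + Pi.single j 1)
  have q2 := h2.dotProduct_mulVec_nonneg (Pi.single i 1 + Pi.single j 1)
  have q3 := h1.dotProduct_mulVec_nonneg (Pi.single i 1 - Pi.single j 1)
  have q4 := h2.dotProduct_mulVec_nonneg (Pi.single i 1 - Pi.single j 1)
  rw [star_trivial, bekk_quad_add] at q1 q2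
  rw [star_trivial, bekk_quad_sub] at q3 q4
  simp only [Matrix.sub_apply, Matrix.add_apply] at q1 q2 q3 q4
  rw [abs_le]
  constructor <;> nlinarith [q1, q2, q3, q4]

/-- `c • 1 ± X` is positive semidefinite for `c` the sum of absolute entries. -/
lemma bekk_psd_shift {d : ℕ} (X : Matrix (Fin d) (Fin d) ℝ) (hX : Xᵀ = X) (ε : ℝ)
    (hε : ε = 1 ∨ ε = -1) :
    ((∑ i, ∑ j, |X i j|) • (1 : Matrix (Fin d) (Fin d) ℝ) + ε • X).PosSemidef := by
  set c := ∑ i, ∑ j, |X i j| with hc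
  refine Matrix.PosSemidef.of_dotProduct_mulVec_nonneg ?_ ?_
  · unfold Matrix.IsHermitian
    rw [conjTranspose_eq_transpose_of_trivial, transpose_add, transpose_smul, transpose_smul,
      transpose_one, hX]
  · intro x
    have key : |x ⬝ᵥ X *ᵥ x| ≤ c * (x ⬝ᵥ x) := by
      have hQ : ∀ k, x k ^ 2 ≤ x ⬝ᵥ x := fun k => by
        have := Finset.single_le_sum (f := fun m => x m * x m)
          (fun m _ => mul_self_nonneg _) (Finset.mem_univ k)
        simpa [dotProduct, sq] using this
      calc |x ⬝ᵥ X *ᵥ x| = |∑ i, ∑ j, x i * (X i j * x j)| := by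
            simp [dotProduct, mulVec, Finset.mul_sum]
        _ ≤ ∑ i, ∑ j, |x i * (X i j * x j)| := by
            refine (Finset.abs_sum_le_sum_abs _ _).trans ?_
            exact Finset.sum_le_sum fun i _ => Finset.abs_sum_le_sum_abs _ _
        _ ≤ ∑ i, ∑ j, |X i j| * (x ⬝ᵥ x) := by
            refine Finset.sum_le_sum fun i _ => Finset.sum_le_sum fun j _ => ?_
            have h1 : |x i * (X i j * x j)| = |X i j| * (|x i| * |x j|) := by
              rw [abs_mul, abs_mul]; ring
            rw [h1]
            refine mul_le_mul_of_nonneg_left ?_ (abs_nonneg _)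
            nlinarith [hQ i, hQ j, sq_abs (x i), sq_abs (x j), sq_nonneg (|x i| - |x j|),
              abs_nonneg (x i), abs_nonneg (x j)]
        _ = c * (x ⬝ᵥ x) := by rw [hc]; simp [Finset.sum_mul]
    have h1 : x ⬝ᵥ (c • (1 : Matrix (Fin d) (Fin d) ℝ) + ε • X) *ᵥ x
        = c * (x ⬝ᵥ x) + ε * (x ⬝ᵥ X *ᵥ x) := by
      rw [add_mulVec, dotProduct_add, smul_mulVec, smul_mulVec, one_mulVec,
        dotProduct_smul, dotProduct_smul]
      simp [smul_eq_mul]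
    simp only [star_trivial, h1]
    rcases hε with h | h <;> rcases abs_le.mp key with ⟨hl, hr⟩ <;> subst h <;> linarith

lemma bekk_psd_sum {ι : Type*} (s : Finset ι) (f : ι → Matrix n' n' ℝ)
    (h : ∀ i ∈ s, (f i).PosSemidef) : (∑ i ∈ s, f i).PosSemidef := by
  classical
  induction s using Finset.induction_on with
  | empty => simpa using Matrix.PosSemidef.zero
  | insert a s' hni ih =>
    rw [Finset.sum_insert hni]
    exact (h a (Finset.mem_insert_self a s')).add (ih fun i hi => h i (Finset.mem_insert_of_mem hi))

/-- spectral radius < 1 implies powers tend to zero in norm -/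
lemma bekk_pow_tendsto_zero (a : Matrix n' n' ℂ) (h : spectralRadius ℂ a < 1) :
    Tendsto (fun k => ‖a ^ k‖) atTop (𝓝 0) := by
  obtain ⟨t, ht1, ht2⟩ := ENNReal.lt_iff_exists_nnreal_btwn.mp h
  have hg := spectrum.pow_nnnorm_pow_one_div_tendsto_nhds_spectralRadius a
  have hev : ∀ᶠ k : ℕ in atTop, (‖a ^ k‖₊ : ENNReal) ^ (1 / (k : ℝ)) < t :=
    hg.eventually_lt_const ht1
  have hev2 : ∀ᶠ k in atTop, ‖a ^ k‖ ≤ (t : ℝ) ^ k := by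
    filter_upwards [hev, eventually_ge_atTop 1] with k hk hk1
    have hkne : (k : ℝ) ≠ 0 := by positivity
    have : ((‖a ^ k‖₊ : ENNReal) ^ (1 / (k : ℝ))) ^ (k : ℝ) < (t : ENNReal) ^ (k : ℝ) :=
      ENNReal.rpow_lt_rpow hk (by positivity)
    rw [← ENNReal.rpow_mul, one_div, inv_mul_cancel₀ hkne, ENNReal.rpow_one,
      ENNReal.rpow_natCast, ← ENNReal.coe_pow, ENNReal.coe_lt_coe] at this
    exact_mod_cast this.le
  refine squeeze_zero' (by filter_upwards with k using norm_nonneg _) hev2 ?_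
  simpa using tendsto_pow_atTop_nhds_zero_of_lt_one t.coe_nonneg (by exact_mod_cast ht2)

/-- spectrum membership gives an eigenvector -/
lemma bekk_exists_eigenvector (M : Matrix n' n' ℂ) (μ : ℂ) (h : μ ∈ spectrum ℂ M) :
    ∃ v : n' → ℂ, v ≠ 0 ∧ M *ᵥ v = μ • v := by
  rw [spectrum.mem_iff] at h
  have hdet : (algebraMap ℂ (Matrix n' n' ℂ) μ - M).det = 0 := by
    by_contra hd
    exact h ((Matrix.isUnit_iff_isUnit_det _).mpr (Ne.isUnit hd))
  obtain ⟨v, hv, hMv⟩ := (Matrix.exists_mulVec_eq_zero_iff).mpr hdet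
  refine ⟨v, hv, ?_⟩
  rw [sub_mulVec] at hMv
  have h2 : (algebraMap ℂ (Matrix n' n' ℂ) μ) *ᵥ v = μ • v := by
    rw [Algebra.algebraMap_eq_smul_one, smul_mulVec, one_mulVec]
  rw [← h2]
  exact (sub_eq_zero.mp hMv).symm

/-- The cone-comparison induction. -/
lemma bekk_cone_induction {d : ℕ} (NB S : Matrix (VechIdx d) (VechIdx d) ℝ)
    (TB TS : Matrix (Fin d) (Fin d) ℝ → Matrix (Fin d) (Fin d) ℝ)
    (hNB : ∀ X, Xᵀ = X → NB *ᵥ matVech X = matVech (TB X))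
    (hS : ∀ Y, Yᵀ = Y → S *ᵥ matVech Y = matVech (TS Y))
    (hsymT : ∀ X, Xᵀ = X → (TB X)ᵀ = TB X)
    (hsymS : ∀ Y, Yᵀ = Y → (TS Y)ᵀ = TS Y)
    (hPSD : ∀ X Y, Xᵀ = X → Y.PosSemidef → (Y - X).PosSemidef → (Y + X).PosSemidef →
      (TS Y).PosSemidef ∧ (TS Y - TB X).PosSemidef ∧ (TS Y + TB X).PosSemidef) :
    ∀ (n : ℕ) X Y, Xᵀ = X → Y.PosSemidef → (Y - X).PosSemidef → (Y + X).PosSemidef →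
      ∃ Z W, Zᵀ = Z ∧ W.PosSemidef ∧ (W - Z).PosSemidef ∧ (W + Z).PosSemidef ∧
        (NB ^ n) *ᵥ matVech X = matVech Z ∧ (S ^ n) *ᵥ matVech Y = matVech W := by
  intro n
  induction n with
  | zero =>
    intro X Y hX hY h1 h2
    exact ⟨X, Y, hX, hY, h1, h2, by simp, by simp⟩
  | succ n ih =>
    intro X Y hX hY h1 h2
    obtain ⟨hTS, hT1, hT2⟩ := hPSD X Y hX hY h1 h2
    have hYsym : Yᵀ = Y := by
      have h' : Yᴴ = Y := hY.1
      rwa [conjTranspose_eq_transpose_of_trivial] at h'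
    obtain ⟨Z, W, hZ, hW, hWZ1, hWZ2, hZeq, hWeq⟩ :=
      ih (TB X) (TS Y) (hsymT X hX) hTS hT1 hT2
    refine ⟨Z, W, hZ, hW, hWZ1, hWZ2, ?_, ?_⟩
    · rw [pow_succ, ← mulVec_mulVec, hNB X hX, hZeq]
    · rw [pow_succ, ← mulVec_mulVec, hS Y hYsym, hWeq]

end Aux

section MainProof

open Filter Topology

attribute [local instance] Matrix.linftyOpSemiNormedRing Matrix.linftyOpNormedRing
  Matrix.linftyOpNormedAlgebra

/-- In the BEKK setting, if the spectral radius of `∑ A_i + ∑ B_j` is `< 1`, then the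
spectral radius of `∑ B_j` is also `< 1`. -/
theorem bekk_spectral_radius_B_lt_one {d p q : ℕ}
    (l : Fin q → ℕ) (s : Fin p → ℕ)
    (Abar : (i : Fin q) → Fin (l i) → Matrix (Fin d) (Fin d) ℝ)
    (Bbar : (j : Fin p) → Fin (s j) → Matrix (Fin d) (Fin d) ℝ)
    (H K : Matrix (VechIdx d) (Fin d × Fin d) ℝ)
    (hHK : ∀ D : Matrix (Fin d) (Fin d) ℝ, Dᵀ = D →
      matVech D = H.mulVec (matVec D) ∧ matVec D = Kᵀ.mulVec (matVech D))
    (hI : H * Kᵀ = 1)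
    (A : Fin q → Matrix (VechIdx d) (VechIdx d) ℝ)
    (B : Fin p → Matrix (VechIdx d) (VechIdx d) ℝ)
    (hA : ∀ i, A i = H * (∑ k, Abar i k ⊗ₖ Abar i k) * Kᵀ)
    (hB : ∀ j, B j = H * (∑ r, Bbar j r ⊗ₖ Bbar j r) * Kᵀ)
    (hspec : ∀ μ ∈ spectrum ℂ ((∑ i, A i + ∑ j, B j).map Complex.ofReal), ‖μ‖ < 1) :
    ∀ μ ∈ spectrum ℂ ((∑ j, B j).map Complex.ofReal), ‖μ‖ < 1 := by
  intro μ hμ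
  by_contra hge
  push_neg at hge
  -- trivial case: empty index type
  rcases isEmpty_or_nonempty (VechIdx d) with hempty | hne
  · haveI : Subsingleton (Matrix (VechIdx d) (VechIdx d) ℂ) :=
      ⟨fun a b => by ext i; exact isEmptyElim i⟩
    exact (spectrum.mem_iff.mp hμ) (isUnit_of_subsingleton _)
  haveI : Nontrivial (Matrix (VechIdx d) (VechIdx d) ℂ) := by
    obtain ⟨x⟩ := hne
    refine ⟨⟨1, 0, fun h => ?_⟩⟩
    have := congrFun (congrFun h x) x
    simp [Matrix.one_apply] at this
  set NB : Matrix (VechIdx d) (VechIdx d) ℝ := ∑ j, B j with hNBdef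
  set S : Matrix (VechIdx d) (VechIdx d) ℝ := ∑ i, A i + ∑ j, B j with hSdef
  set Sc : Matrix (VechIdx d) (VechIdx d) ℂ := S.map Complex.ofReal with hScdef
  set Nc : Matrix (VechIdx d) (VechIdx d) ℂ := NB.map Complex.ofReal with hNcdef
  -- transfer operators
  set TB : Matrix (Fin d) (Fin d) ℝ → Matrix (Fin d) (Fin d) ℝ :=
    fun X => ∑ j, ∑ r, Bbar j r * X * (Bbar j r)ᵀ with hTBdef
  set TA : Matrix (Fin d) (Fin d) ℝ → Matrix (Fin d) (Fin d) ℝ :=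
    fun X => ∑ i, ∑ k, Abar i k * X * (Abar i k)ᵀ with hTAdef
  -- action of an H ⬝ P ⬝ Kᵀ block on vech coordinates
  have hHPK : ∀ (m : ℕ) (G : Fin m → Matrix (Fin d) (Fin d) ℝ) (X : Matrix (Fin d) (Fin d) ℝ),
      Xᵀ = X →
      (H * (∑ k, G k ⊗ₖ G k) * Kᵀ) *ᵥ matVech X = matVech (∑ k, G k * X * (G k)ᵀ) := by
    intro m G X hX
    have hYsym : (∑ k, G k * X * (G k)ᵀ)ᵀ = ∑ k, G k * X * (G k)ᵀ := by
      rw [transpose_sum]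
      refine Finset.sum_congr rfl fun k _ => ?_
      rw [transpose_mul, transpose_mul, transpose_transpose, hX, mul_assoc]
    calc (H * (∑ k, G k ⊗ₖ G k) * Kᵀ) *ᵥ matVech X
        = H *ᵥ ((∑ k, G k ⊗ₖ G k) *ᵥ (Kᵀ *ᵥ matVech X)) := by
          rw [mulVec_mulVec, mulVec_mulVec]
      _ = H *ᵥ ((∑ k, G k ⊗ₖ G k) *ᵥ matVec X) := by rw [← (hHK X hX).2]
      _ = H *ᵥ matVec (∑ k, G k * X * (G k)ᵀ) := by
          rw [bekk_sum_mulVec]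
          have h1 : ∀ k : Fin m, (G k ⊗ₖ G k) *ᵥ matVec X = matVec (G k * X * (G k)ᵀ) :=
            fun k => bekk_kron_mulVec _ _ _
          have h2 : (∑ k, (G k ⊗ₖ G k) *ᵥ matVec X) = matVec (∑ k, G k * X * (G k)ᵀ) := by
            simp only [h1]
            funext pt
            simp [matVec, Matrix.sum_apply, Finset.sum_apply]
          rw [h2]
      _ = matVech (∑ k, G k * X * (G k)ᵀ) := (hHK _ hYsym).1.symm
  have hsymTB : ∀ X, Xᵀ = X → (TB X)ᵀ = TB X := by
    intro X hX
    simp only [hTBdef, transpose_sum]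
    refine Finset.sum_congr rfl fun j _ => Finset.sum_congr rfl fun r _ => ?_
    rw [transpose_mul, transpose_mul, transpose_transpose, hX, mul_assoc]
  have hsymTA : ∀ X, Xᵀ = X → (TA X)ᵀ = TA X := by
    intro X hX
    simp only [hTAdef, transpose_sum]
    refine Finset.sum_congr rfl fun i _ => Finset.sum_congr rfl fun k _ => ?_
    rw [transpose_mul, transpose_mul, transpose_transpose, hX, mul_assoc]
  have hmulNB : ∀ X, Xᵀ = X → NB *ᵥ matVech X = matVech (TB X) := by
    intro X hX
    rw [hNBdef, bekk_sum_mulVec]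
    have : ∀ j, (B j) *ᵥ matVech X = matVech (∑ r, Bbar j r * X * (Bbar j r)ᵀ) := by
      intro j; rw [hB j]; exact hHPK _ _ X hX
    rw [Finset.sum_congr rfl fun j _ => this j]
    ext pt
    simp [matVech, hTBdef, Matrix.sum_apply, Finset.sum_apply]
  have hmulS : ∀ X, Xᵀ = X → S *ᵥ matVech X = matVech (TA X + TB X) := by
    intro X hX
    rw [hSdef, add_mulVec, bekk_sum_mulVec, bekk_sum_mulVec]
    have hAj : ∀ i, (A i) *ᵥ matVech X = matVech (∑ k, Abar i k * X * (Abar i k)ᵀ) := by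
      intro i; rw [hA i]; exact hHPK _ _ X hX
    have hBj : ∀ j, (B j) *ᵥ matVech X = matVech (∑ r, Bbar j r * X * (Bbar j r)ᵀ) := by
      intro j; rw [hB j]; exact hHPK _ _ X hX
    rw [Finset.sum_congr rfl fun i _ => hAj i, Finset.sum_congr rfl fun j _ => hBj j]
    ext pt
    simp [matVech, hTAdef, hTBdef, Matrix.sum_apply, Finset.sum_apply]
  -- positivity facts
  have hpsd_congr : ∀ (G M : Matrix (Fin d) (Fin d) ℝ), M.PosSemidef →
      (G * M * Gᵀ).PosSemidef := by
    intro G M hM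
    have := hM.mul_mul_conjTranspose_same G
    rwa [conjTranspose_eq_transpose_of_trivial] at this
  have hTBpsd : ∀ M, M.PosSemidef → (TB M).PosSemidef := by
    intro M hM
    exact bekk_psd_sum _ _ fun j _ => bekk_psd_sum _ _ fun r _ => hpsd_congr _ _ hM
  have hTApsd : ∀ M, M.PosSemidef → (TA M).PosSemidef := by
    intro M hM
    exact bekk_psd_sum _ _ fun i _ => bekk_psd_sum _ _ fun k _ => hpsd_congr _ _ hM
  have hTBsub : ∀ X Y : Matrix (Fin d) (Fin d) ℝ, TB Y - TB X = TB (Y - X) := by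
    intro X Y
    simp only [hTBdef, ← Finset.sum_sub_distrib]
    refine Finset.sum_congr rfl fun j _ => Finset.sum_congr rfl fun r _ => ?_
    rw [mul_sub, sub_mul]
  have hTBadd : ∀ X Y : Matrix (Fin d) (Fin d) ℝ, TB Y + TB X = TB (Y + X) := by
    intro X Y
    simp only [hTBdef, ← Finset.sum_add_distrib]
    refine Finset.sum_congr rfl fun j _ => Finset.sum_congr rfl fun r _ => ?_
    rw [mul_add, add_mul]
  have hPSD : ∀ X Y : Matrix (Fin d) (Fin d) ℝ, Xᵀ = X → Y.PosSemidef →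
      (Y - X).PosSemidef → (Y + X).PosSemidef →
      (TA Y + TB Y).PosSemidef ∧ (TA Y + TB Y - TB X).PosSemidef ∧
        (TA Y + TB Y + TB X).PosSemidef := by
    intro X Y hX hY h1 h2
    refine ⟨(hTApsd Y hY).add (hTBpsd Y hY), ?_, ?_⟩
    · have : TA Y + TB Y - TB X = TA Y + (TB Y - TB X) := by abel
      rw [this, hTBsub]
      exact (hTApsd Y hY).add (hTBpsd _ h1)
    · have : TA Y + TB Y + TB X = TA Y + (TB Y + TB X) := by abel
      rw [this, hTBadd]
      exact (hTApsd Y hY).add (hTBpsd _ h2)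
  -- the key per-vector bound
  have hpowmap : ∀ n : ℕ, (S ^ n).map Complex.ofReal = Sc ^ n := by
    intro n
    have h' : ∀ M : Matrix (VechIdx d) (VechIdx d) ℝ,
        M.map Complex.ofReal = Complex.ofRealHom.mapMatrix M := fun M => rfl
    rw [hScdef]
    simp only [h']
    rw [map_pow]
  have hmulVecMap : ∀ (M : Matrix (VechIdx d) (VechIdx d) ℝ) (u : VechIdx d → ℝ) (idx : VechIdx d),
      ((M.map Complex.ofReal) *ᵥ (fun t => ((u t : ℝ) : ℂ))) idx = ((M *ᵥ u) idx : ℝ) := by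
    intro M u idx
    simp [mulVec, dotProduct, Matrix.map_apply]
  have hScbound : ∀ (n : ℕ) (u : VechIdx d → ℝ) (idx : VechIdx d),
      |((S ^ n) *ᵥ u) idx| ≤ ‖Sc ^ n‖ * ‖(fun t => ((u t : ℝ) : ℂ))‖ := by
    intro n u idx
    have h1 : |((S ^ n) *ᵥ u) idx| = ‖((Sc ^ n) *ᵥ (fun t => ((u t : ℝ) : ℂ))) idx‖ := by
      rw [← hpowmap n, hmulVecMap]
      simp [Complex.norm_real]
    rw [h1]
    exact (norm_le_pi_norm _ idx).trans (Matrix.linfty_opNorm_mulVec _ _)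
  have main : ∀ w : VechIdx d → ℝ, ∃ Cw : ℝ, ∀ (n : ℕ) (p' : VechIdx d),
      |((NB ^ n) *ᵥ w) p'| ≤ Cw * ‖Sc ^ n‖ := by
    intro w
    -- the symmetric matrix with vech w
    set Xw : Matrix (Fin d) (Fin d) ℝ :=
      fun i j => if h : j ≤ i then w ⟨(i, j), h⟩ else w ⟨(j, i), le_of_not_ge h⟩ with hXwdef
    have hXwsym : Xwᵀ = Xw := by
      ext i j
      rw [transpose_apply]
      by_cases h : j ≤ i
      · by_cases h' : i ≤ j
        · have : i = j := le_antisymm h' h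
          subst this
          rfl
        · simp [hXwdef, h, h']
      · simp [hXwdef, h, le_of_not_ge h]
    have hvech : matVech Xw = w := by
      ext pt
      obtain ⟨⟨i, j⟩, hij⟩ := pt
      simp [matVech, hXwdef, hij]
    set c : ℝ := ∑ i, ∑ j, |Xw i j| with hcdef
    set Y0 : Matrix (Fin d) (Fin d) ℝ := c • (1 : Matrix (Fin d) (Fin d) ℝ) with hY0def
    have hY0plus : (Y0 + Xw).PosSemidef := by
      have := bekk_psd_shift Xw hXwsym 1 (Or.inl rfl)
      rwa [one_smul] at this
    have hY0minus : (Y0 - Xw).PosSemidef := by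
      have := bekk_psd_shift Xw hXwsym (-1) (Or.inr rfl)
      rwa [neg_one_smul, ← sub_eq_add_neg] at this
    have hY0 : Y0.PosSemidef := by
      refine Matrix.PosSemidef.of_dotProduct_mulVec_nonneg ?_ ?_
      · unfold Matrix.IsHermitian
        rw [conjTranspose_eq_transpose_of_trivial, hY0def, transpose_smul, transpose_one]
      · intro x
        have hc0 : 0 ≤ c := Finset.sum_nonneg fun i _ => Finset.sum_nonneg fun j _ => abs_nonneg _
        have : x ⬝ᵥ Y0 *ᵥ x = c * (x ⬝ᵥ x) := by
          rw [hY0def, smul_mulVec, one_mulVec, dotProduct_smul]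
          simp [smul_eq_mul]
        rw [star_trivial, this]
        exact mul_nonneg hc0 (Finset.sum_nonneg fun i _ => mul_self_nonneg _)
    have key := bekk_cone_induction NB S TB (fun Y => TA Y + TB Y) hmulNB hmulS hsymTB
      (fun Y hY => by rw [transpose_add, hsymTA Y hY, hsymTB Y hY]) hPSD
    refine ⟨‖(fun t => ((matVech Y0 t : ℝ) : ℂ))‖, ?_⟩
    intro n p'
    obtain ⟨Z, W, hZ, hW, hWZ1, hWZ2, hZeq, hWeq⟩ := key n Xw Y0 hXwsym hY0 hY0minus hY0plus
    obtain ⟨⟨i, j⟩, hij⟩ := p'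
    have hzval : ((NB ^ n) *ᵥ w) ⟨(i, j), hij⟩ = Z i j := by
      rw [← hvech, hZeq]; rfl
    rw [hzval]
    have hbound := bekk_entry_bound hZ hWZ1 hWZ2 i j
    have hWi : W i i = ((S ^ n) *ᵥ matVech Y0) ⟨(i, i), le_refl i⟩ := by
      rw [hWeq]; rfl
    have hWj : W j j = ((S ^ n) *ᵥ matVech Y0) ⟨(j, j), le_refl j⟩ := by
      rw [hWeq]; rfl
    have hbi := hScbound n (matVech Y0) ⟨(i, i), le_refl i⟩
    have hbj := hScbound n (matVech Y0) ⟨(j, j), le_refl j⟩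
    have h1 : W i i ≤ ‖Sc ^ n‖ * ‖(fun t => ((matVech Y0 t : ℝ) : ℂ))‖ := by
      rw [hWi]; exact (le_abs_self _).trans hbi
    have h2 : W j j ≤ ‖Sc ^ n‖ * ‖(fun t => ((matVech Y0 t : ℝ) : ℂ))‖ := by
      rw [hWj]; exact (le_abs_self _).trans hbj
    calc |Z i j| ≤ (W i i + W j j) / 2 := hbound
      _ ≤ ‖(fun t => ((matVech Y0 t : ℝ) : ℂ))‖ * ‖Sc ^ n‖ := by linarith [mul_comm ‖Sc ^ n‖ ‖(fun t => ((matVech Y0 t : ℝ) : ℂ))‖]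
  -- spectral radius of Sc is < 1, so powers tend to 0
  have hrad : spectralRadius ℂ Sc < 1 := by
    have := spectrum.spectralRadius_lt_of_forall_lt Sc (r := 1)
      (fun z hz => by exact_mod_cast hspec z hz)
    simpa using this
  have htend : Tendsto (fun n => ‖Sc ^ n‖) atTop (𝓝 0) := bekk_pow_tendsto_zero Sc hrad
  -- eigenvector of Nc
  obtain ⟨v, hv0, heig⟩ := bekk_exists_eigenvector _ μ hμ
  obtain ⟨p0, hp0⟩ := Function.ne_iff.mp hv0
  have hpow : ∀ n : ℕ, (Nc ^ n) *ᵥ v = (μ ^ n) • v := by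
    intro n
    induction n with
    | zero => simp
    | succ n ih =>
      rw [pow_succ, ← mulVec_mulVec, heig, mulVec_smul, ih, smul_smul, ← pow_succ']
  -- real and imaginary parts
  have hre : ∀ (M : Matrix (VechIdx d) (VechIdx d) ℝ) (idx : VechIdx d),
      ((M.map Complex.ofReal *ᵥ v) idx).re = (M *ᵥ fun t => (v t).re) idx := by
    intro M idx
    simp [mulVec, dotProduct, Complex.re_sum, Matrix.map_apply, Complex.mul_re]
  have him : ∀ (M : Matrix (VechIdx d) (VechIdx d) ℝ) (idx : VechIdx d),
      ((M.map Complex.ofReal *ᵥ v) idx).im = (M *ᵥ fun t => (v t).im) idx := by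
    intro M idx
    simp [mulVec, dotProduct, Complex.im_sum, Matrix.map_apply, Complex.mul_im]
  obtain ⟨Ca, hCa⟩ := main fun t => (v t).re
  obtain ⟨Cb, hCb⟩ := main fun t => (v t).im
  have hNcpow : ∀ n : ℕ, (NB ^ n).map Complex.ofReal = Nc ^ n := by
    intro n
    have h' : ∀ M : Matrix (VechIdx d) (VechIdx d) ℝ,
        M.map Complex.ofReal = Complex.ofRealHom.mapMatrix M := fun M => rfl
    rw [hNcdef]
    simp only [h']
    rw [map_pow]
  have hfinal : ∀ n : ℕ, ‖v p0‖ ≤ (Ca + Cb) * ‖Sc ^ n‖ := by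
    intro n
    have h1 : ((Nc ^ n) *ᵥ v) p0 = μ ^ n * v p0 := by rw [hpow n]; rfl
    have h2 : ‖μ ^ n * v p0‖ = ‖μ‖ ^ n * ‖v p0‖ := by rw [norm_mul, norm_pow]
    have h3 : ‖v p0‖ ≤ ‖μ‖ ^ n * ‖v p0‖ := by
      nlinarith [one_le_pow₀ hge (n := n), norm_nonneg (v p0),
        pow_nonneg (norm_nonneg μ) n]
    have h4 : ‖((Nc ^ n) *ᵥ v) p0‖ ≤ |(((Nc ^ n) *ᵥ v) p0).re| + |(((Nc ^ n) *ᵥ v) p0).im| :=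
      Complex.norm_le_abs_re_add_abs_im _
    have h5 : |(((Nc ^ n) *ᵥ v) p0).re| ≤ Ca * ‖Sc ^ n‖ := by
      rw [← hNcpow n, hre (NB ^ n) p0]
      exact hCa n p0
    have h6 : |(((Nc ^ n) *ᵥ v) p0).im| ≤ Cb * ‖Sc ^ n‖ := by
      rw [← hNcpow n, him (NB ^ n) p0]
      exact hCb n p0
    calc ‖v p0‖ ≤ ‖μ‖ ^ n * ‖v p0‖ := h3
      _ = ‖((Nc ^ n) *ᵥ v) p0‖ := by rw [h1, h2]
      _ ≤ |(((Nc ^ n) *ᵥ v) p0).re| + |(((Nc ^ n) *ᵥ v) p0).im| := h4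
      _ ≤ Ca * ‖Sc ^ n‖ + Cb * ‖Sc ^ n‖ := add_le_add h5 h6
      _ = (Ca + Cb) * ‖Sc ^ n‖ := by ring
  have hlim : Tendsto (fun n => (Ca + Cb) * ‖Sc ^ n‖) atTop (𝓝 0) := by
    simpa using htend.const_mul (Ca + Cb)
  have : ‖v p0‖ ≤ 0 := ge_of_tendsto hlim (Filter.Eventually.of_forall fun n => hfinal n)
  exact hp0 (norm_le_zero_iff.mp this)

end MainProof
end

section
/- Let B_1,...,B_p be n×n real matrices (n = d(d+1)/2) arising as B_j = H_d(Σ_r B̄_{j,r} ⊗ B̄_{j,r})K_dᵗ, and let B be the block companion matrix with first block row (B_1 B_2 ... B_p), identity blocks on the subdiagonal, and zeros elsewhere. If the spectral radius of Σ_{j=1}^p B_j is less than 1, then the spectral radius of the companion matrix B is less than 1. -/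
open Matrix Kronecker

namespace CompAux

open Filter Topology
open scoped NNReal ENNReal

variable {d : ℕ}

/-- vec over any ring -/
def gvec {R : Type*} (M : Matrix (Fin d) (Fin d) R) : Fin d × Fin d → R := fun p => M p.1 p.2

/-- vech over any ring -/
def gvech {R : Type*} (M : Matrix (Fin d) (Fin d) R) : VechIdx d → R := fun p => M p.1.1 p.1.2

/-- symmetric matrix with prescribed vech -/
def symOf {R : Type*} (u : VechIdx d → R) : Matrix (Fin d) (Fin d) R :=
  fun i j => if h : j ≤ i then u ⟨(i, j), h⟩ else u ⟨(j, i), le_of_not_ge h⟩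

lemma symOf_transpose {R : Type*} (u : VechIdx d → R) : (symOf u)ᵀ = symOf u := by
  ext i j
  simp only [transpose_apply, symOf]
  rcases le_total i j with h | h
  · rcases eq_or_lt_of_le h with rfl | hlt
    · simp
    · rw [dif_pos h, dif_neg (not_le.mpr hlt)]
  · rcases eq_or_lt_of_le h with rfl | hlt
    · simp
    · rw [dif_neg (not_le.mpr hlt), dif_pos h]

lemma gvech_symOf {R : Type*} (u : VechIdx d → R) : gvech (symOf u) = u := by
  funext q
  obtain ⟨⟨i, j⟩, hij⟩ := q
  simp only [gvech, symOf, dif_pos hij]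

lemma sym_ext {R : Type*} {M N : Matrix (Fin d) (Fin d) R} (hM : Mᵀ = M) (hN : Nᵀ = N)
    (h : gvech M = gvech N) : M = N := by
  ext i j
  rcases le_total j i with hj | hj
  · exact congrFun h ⟨(i, j), hj⟩
  · have h2 : M j i = N j i := congrFun h ⟨(j, i), hj⟩
    calc M i j = Mᵀ j i := rfl
    _ = Nᵀ j i := by rw [hM, hN]; exact h2
    _ = N i j := rfl

lemma sum_mulVec' {ι R m n : Type*} [Fintype n] [NonUnitalNonAssocSemiring R]
    (s : Finset ι) (A : ι → Matrix m n R) (v : n → R) :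
    (∑ i ∈ s, A i) *ᵥ v = ∑ i ∈ s, (A i) *ᵥ v := by
  funext k
  simp only [Matrix.mulVec, dotProduct, Finset.sum_apply, Finset.sum_apply',
    Matrix.sum_apply, Finset.sum_mul]
  rw [Finset.sum_comm]

lemma dotProduct_sum' {ι R n : Type*} [Fintype n] [NonUnitalNonAssocSemiring R]
    (s : Finset ι) (v : n → R) (w : ι → n → R) :
    v ⬝ᵥ (∑ i ∈ s, w i) = ∑ i ∈ s, v ⬝ᵥ w i := by
  simp only [dotProduct, Finset.sum_apply, Finset.mul_sum]
  rw [Finset.sum_comm]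

lemma kron_mulVec {R : Type*} [CommRing R] (A B D : Matrix (Fin d) (Fin d) R) :
    (A ⊗ₖ B) *ᵥ gvec D = gvec (A * D * Bᵀ) := by
  funext p
  obtain ⟨i, j⟩ := p
  simp only [gvec, Matrix.mulVec, dotProduct, Matrix.mul_apply, kroneckerMap_apply,
    transpose_apply, Fintype.sum_prod_type, Finset.sum_mul, Finset.mul_sum]
  rw [Finset.sum_comm]
  congr 1; funext k
  congr 1; funext l
  ring

/-- complexified real-matrix mulVec commutes with star -/
lemma mulVec_ofReal_star {m n : Type*} [Fintype n] (M : Matrix m n ℝ) (x : n → ℂ) :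
    (M.map (Complex.ofReal)) *ᵥ (star x) = star ((M.map (Complex.ofReal)) *ᵥ x) := by
  funext i
  simp only [Matrix.mulVec, dotProduct, Pi.star_apply, map_apply, star_sum, star_mul',
    Complex.star_def, Complex.conj_ofReal]

lemma mulVec_ofReal_add_smul {m n : Type*} [Fintype n] (M : Matrix m n ℝ) (a b : n → ℝ) :
    (M.map (Complex.ofReal)) *ᵥ (fun j => (a j : ℂ) + (b j : ℂ) * Complex.I)
      = fun i => ((M *ᵥ a) i : ℂ) + ((M *ᵥ b) i : ℂ) * Complex.I := by
  funext i
  simp only [Matrix.mulVec, dotProduct, map_apply, mul_add, Finset.sum_add_distrib]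
  push_cast
  congr 1
  rw [Finset.sum_mul]
  congr 1; funext j; ring

lemma mapC_mul {l m n : Type*} [Fintype m] (M : Matrix l m ℝ) (N : Matrix m n ℝ) :
    (M * N).map Complex.ofReal = M.map Complex.ofReal * N.map Complex.ofReal := by
  ext i j
  simp only [map_apply, Matrix.mul_apply]
  push_cast
  rfl

lemma mapC_sum {ι m n : Type*} (s : Finset ι) (M : ι → Matrix m n ℝ) :
    (∑ i ∈ s, M i).map Complex.ofReal = ∑ i ∈ s, (M i).map Complex.ofReal := by
  ext i j
  simp [map_apply, Matrix.sum_apply]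

lemma mapC_kron (A B : Matrix (Fin d) (Fin d) ℝ) :
    (A ⊗ₖ B).map Complex.ofReal = (A.map Complex.ofReal) ⊗ₖ (B.map Complex.ofReal) := by
  ext p q
  obtain ⟨i, j⟩ := p
  obtain ⟨k, l⟩ := q
  simp [map_apply, kroneckerMap_apply]

lemma sym_conj_sum {m : ℕ} (A : Fin m → Matrix (Fin d) (Fin d) ℂ)
    {V : Matrix (Fin d) (Fin d) ℂ} (hV : Vᵀ = V) :
    (∑ r, A r * V * (A r)ᵀ)ᵀ = ∑ r, A r * V * (A r)ᵀ := by
  rw [Matrix.transpose_sum]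
  refine Finset.sum_congr rfl fun r _ => ?_
  rw [Matrix.transpose_mul, Matrix.transpose_mul, Matrix.transpose_transpose, hV, Matrix.mul_assoc]

/-- the complexification of the `hHK` hypothesis -/
lemma hHK_complexify {H K : Matrix (VechIdx d) (Fin d × Fin d) ℝ}
    (hHK : ∀ D : Matrix (Fin d) (Fin d) ℝ, Dᵀ = D →
      gvech D = H.mulVec (gvec D) ∧ gvec D = Kᵀ.mulVec (gvech D))
    (Dc : Matrix (Fin d) (Fin d) ℂ) (hDc : Dcᵀ = Dc) :
    gvech Dc = (H.map Complex.ofReal).mulVec (gvec Dc)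
      ∧ gvec Dc = ((Kᵀ).map Complex.ofReal).mulVec (gvech Dc) := by
  set P : Matrix (Fin d) (Fin d) ℝ := fun i j => (Dc i j).re with hP
  set Q : Matrix (Fin d) (Fin d) ℝ := fun i j => (Dc i j).im with hQ
  have hsymm : ∀ i j, Dc j i = Dc i j := fun i j => by
    simpa [Matrix.transpose_apply] using congrFun (congrFun hDc i) j
  have hPs : Pᵀ = P := by ext i j; show (Dc j i).re = (Dc i j).re; rw [hsymm]
  have hQs : Qᵀ = Q := by ext i j; show (Dc j i).im = (Dc i j).im; rw [hsymm]
  obtain ⟨hP1, hP2⟩ := hHK P hPs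
  obtain ⟨hQ1, hQ2⟩ := hHK Q hQs
  have hvecD : gvec Dc = fun p => ((gvec P) p : ℂ) + ((gvec Q) p : ℂ) * Complex.I :=
    funext fun p => (Complex.re_add_im _).symm
  have hvechD : gvech Dc = fun q => ((gvech P) q : ℂ) + ((gvech Q) q : ℂ) * Complex.I :=
    funext fun q => (Complex.re_add_im _).symm
  constructor
  · rw [hvecD, mulVec_ofReal_add_smul H (gvec P) (gvec Q), hvechD, ← hP1, ← hQ1]
  · rw [hvechD, mulVec_ofReal_add_smul Kᵀ (gvech P) (gvech Q), hvecD, ← hP2, ← hQ2]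

/-- The key structural step: the complexified `B j` acts on `vech` of complex symmetric
matrices as the CP map `V ↦ ∑ r, A r * V * (A r)ᵀ`. -/
lemma step_vech {H K : Matrix (VechIdx d) (Fin d × Fin d) ℝ}
    (hHK : ∀ D : Matrix (Fin d) (Fin d) ℝ, Dᵀ = D →
      gvech D = H.mulVec (gvec D) ∧ gvec D = Kᵀ.mulVec (gvech D))
    {m : ℕ} (A : Fin m → Matrix (Fin d) (Fin d) ℝ)
    (Bj : Matrix (VechIdx d) (VechIdx d) ℝ)
    (hBj : Bj = H * (∑ r, A r ⊗ₖ A r) * Kᵀ)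
    (V : Matrix (Fin d) (Fin d) ℂ) (hV : Vᵀ = V) :
    (Bj.map Complex.ofReal) *ᵥ gvech V
      = gvech (∑ r, (A r).map Complex.ofReal * V * ((A r).map Complex.ofReal)ᵀ) := by
  have hW : (∑ r, (A r).map Complex.ofReal * V * ((A r).map Complex.ofReal)ᵀ)ᵀ
      = ∑ r, (A r).map Complex.ofReal * V * ((A r).map Complex.ofReal)ᵀ :=
    sym_conj_sum _ hV
  rw [hBj, mapC_mul, mapC_mul, ← Matrix.mulVec_mulVec, ← Matrix.mulVec_mulVec]
  rw [← (hHK_complexify hHK V hV).2]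
  rw [mapC_sum, sum_mulVec']
  have hsum : ∑ r, ((A r ⊗ₖ A r).map Complex.ofReal) *ᵥ gvec V
      = gvec (∑ r, (A r).map Complex.ofReal * V * ((A r).map Complex.ofReal)ᵀ) := by
    rw [show (gvec (∑ r, (A r).map Complex.ofReal * V * ((A r).map Complex.ofReal)ᵀ)
        : Fin d × Fin d → ℂ)
      = ∑ r, gvec ((A r).map Complex.ofReal * V * ((A r).map Complex.ofReal)ᵀ) by
        funext pq; simp [gvec, Matrix.sum_apply, Finset.sum_apply]]
    refine Finset.sum_congr rfl fun r _ => ?_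
    rw [mapC_kron, kron_mulVec]
  rw [hsum, ← (hHK_complexify hHK _ hW).1]

lemma dot_conj (A : Matrix (Fin d) (Fin d) ℝ) (M : Matrix (Fin d) (Fin d) ℂ) (x y : Fin d → ℂ) :
    star x ⬝ᵥ ((A.map Complex.ofReal * M * (A.map Complex.ofReal)ᵀ) *ᵥ y)
      = star ((A.map Complex.ofReal)ᵀ *ᵥ x) ⬝ᵥ (M *ᵥ ((A.map Complex.ofReal)ᵀ *ᵥ y)) := by
  rw [← Matrix.mulVec_mulVec, ← Matrix.mulVec_mulVec]
  rw [Matrix.dotProduct_mulVec (star x) (A.map Complex.ofReal)]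
  rw [← Matrix.mulVec_transpose]
  rw [show (A.map Complex.ofReal)ᵀ = (Aᵀ).map Complex.ofReal from Matrix.transpose_map.symm]
  rw [mulVec_ofReal_star]

attribute [local instance] Matrix.linftyOpNormedRing Matrix.linftyOpNormedAlgebra

lemma pow_norm_tendsto_zero {ι : Type*} [Fintype ι] [DecidableEq ι] [Nonempty ι]
    (a : Matrix ι ι ℂ) (h : ∀ μ ∈ spectrum ℂ a, ‖μ‖ < 1) :
    Tendsto (fun k : ℕ => ‖a ^ k‖) atTop (𝓝 0) := by
  haveI : CompleteSpace (Matrix ι ι ℂ) :=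
    inferInstance
  have hρ : spectralRadius ℂ a < (1 : ℝ≥0) := by
    refine spectrum.spectralRadius_lt_of_forall_lt a ?_
    intro z hz
    have := h z hz
    rwa [← NNReal.coe_lt_coe, coe_nnnorm, NNReal.coe_one]
  have hρ1 : spectralRadius ℂ a < 1 := by simpa using hρ
  have hne : spectralRadius ℂ a ≠ ⊤ := hρ1.ne_top
  have hgel := spectrum.pow_norm_pow_one_div_tendsto_nhds_spectralRadius a
  have hgel' : Tendsto (fun n : ℕ => ‖a ^ n‖ ^ (1 / n : ℝ)) atTop
      (𝓝 (spectralRadius ℂ a).toReal) := by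
    have := (ENNReal.tendsto_toReal hne).comp hgel
    refine this.congr (fun n => ?_)
    simp only [Function.comp_apply]
    exact ENNReal.toReal_ofReal (Real.rpow_nonneg (norm_nonneg _) _)
  set t : ℝ := (spectralRadius ℂ a).toReal with ht
  have ht0 : 0 ≤ t := ENNReal.toReal_nonneg
  have ht1 : t < 1 := by
    rw [ht, ← ENNReal.toReal_one]
    exact (ENNReal.toReal_lt_toReal hne (by simp)).mpr hρ1
  set r : ℝ := (t + 1) / 2 with hr
  have htr : t < r := by rw [hr]; linarith
  have hr0 : 0 ≤ r := by rw [hr]; linarith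
  have hr1 : r < 1 := by rw [hr]; linarith
  have hev : ∀ᶠ n : ℕ in atTop, ‖a ^ n‖ ^ (1 / n : ℝ) < r :=
    hgel'.eventually_lt_const htr
  have hev2 : ∀ᶠ n : ℕ in atTop, ‖a ^ n‖ ≤ r ^ n := by
    filter_upwards [hev, eventually_ge_atTop 1] with n hn hn1
    have hnne : (n : ℝ) ≠ 0 := by positivity
    have h1 : (‖a ^ n‖ ^ (1 / (n:ℝ))) ^ (n:ℝ) = ‖a ^ n‖ := by
      rw [← Real.rpow_mul (norm_nonneg _), one_div_mul_cancel hnne, Real.rpow_one]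
    have h2 : (‖a ^ n‖ ^ (1 / (n:ℝ))) ^ (n:ℝ) ≤ r ^ (n:ℝ) :=
      Real.rpow_le_rpow (Real.rpow_nonneg (norm_nonneg _) _) hn.le (Nat.cast_nonneg n)
    rw [← h1, ← Real.rpow_natCast r n]
    exact h2
  exact squeeze_zero' (Eventually.of_forall fun n => norm_nonneg _) hev2
    (tendsto_pow_atTop_nhds_zero_of_lt_one hr0 hr1)

end CompAux
attribute [local instance] Matrix.linftyOpNormedRing Matrix.linftyOpNormedAlgebra

set_option maxHeartbeats 1000000 in
open CompAux Filter Topology in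
/-- If the matrices `B_j = H (∑ᵣ B̄_{j,r} ⊗ B̄_{j,r}) Kᵀ` satisfy that the spectral
radius of `∑ B_j` is `< 1`, then the block companion matrix `B` (first block row
`(B_1 … B_p)`, identity blocks on the subdiagonal, zeros elsewhere) also has spectral
radius `< 1`. -/
theorem companion_spectral_radius_lt_one {d p : ℕ}
    (s : Fin p → ℕ)
    (Bbar : (j : Fin p) → Fin (s j) → Matrix (Fin d) (Fin d) ℝ)
    (H K : Matrix (VechIdx d) (Fin d × Fin d) ℝ)
    (hHK : ∀ D : Matrix (Fin d) (Fin d) ℝ, Dᵀ = D →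
      matVech D = H.mulVec (matVec D) ∧ matVec D = Kᵀ.mulVec (matVech D))
    (hI : H * Kᵀ = 1)
    (B : Fin p → Matrix (VechIdx d) (VechIdx d) ℝ)
    (hB : ∀ j, B j = H * (∑ r, Bbar j r ⊗ₖ Bbar j r) * Kᵀ)
    (Bc : Matrix (Fin p × VechIdx d) (Fin p × VechIdx d) ℝ)
    (hBc : ∀ (a b : Fin p) (i j : VechIdx d),
      Bc (a, i) (b, j)
        = if (a : ℕ) = 0 then B b i j
          else if (a : ℕ) = (b : ℕ) + 1 then (if i = j then 1 else 0) else 0)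
    (hspec : ∀ μ ∈ spectrum ℂ ((∑ j, B j).map Complex.ofReal), ‖μ‖ < 1) :
    ∀ μ ∈ spectrum ℂ (Bc.map Complex.ofReal), ‖μ‖ < 1 := by
  classical
  intro μ hμ
  by_contra hcon
  push_neg at hcon
  have hμ0 : μ ≠ 0 := by
    intro h; rw [h, norm_zero] at hcon; linarith
  -- extract an eigenvector
  rw [spectrum.mem_iff] at hμ
  have hdet : ((algebraMap ℂ (Matrix (Fin p × VechIdx d) (Fin p × VechIdx d) ℂ)) μ
      - Bc.map Complex.ofReal).det = 0 := by
    by_contra hd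
    exact hμ ((Matrix.isUnit_iff_isUnit_det _).mpr (isUnit_iff_ne_zero.mpr hd))
  obtain ⟨x, hx0, hxv⟩ := Matrix.exists_mulVec_eq_zero_iff.mpr hdet
  have heig : (Bc.map Complex.ofReal) *ᵥ x = μ • x := by
    have h1 : ((algebraMap ℂ (Matrix (Fin p × VechIdx d) (Fin p × VechIdx d) ℂ)) μ
        - Bc.map Complex.ofReal) *ᵥ x
        = μ • x - (Bc.map Complex.ofReal) *ᵥ x := by
      rw [Matrix.sub_mulVec]
      congr 1
      rw [Algebra.algebraMap_eq_smul_one, Matrix.smul_mulVec, Matrix.one_mulVec]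
    rw [h1] at hxv
    exact (sub_eq_zero.mp hxv).symm
  obtain ⟨⟨a₀, i₀⟩, hxa⟩ := Function.ne_iff.mp hx0
  have hp : 0 < p := a₀.pos
  haveI : Nonempty (VechIdx d) := ⟨i₀⟩
  -- row equations
  have hrow : ∀ (a : Fin p) (i : VechIdx d),
      (∑ z : Fin p × VechIdx d, ((Bc (a, i) z : ℝ) : ℂ) * x z) = μ * x (a, i) := by
    intro a i
    have h := congrFun heig (a, i)
    simpa [Matrix.mulVec, dotProduct, Matrix.map_apply, Pi.smul_apply, smul_eq_mul] using h
  -- subdiagonal shift equations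
  have hshift : ∀ (a b : Fin p), (a : ℕ) = (b : ℕ) + 1 → ∀ i, x (b, i) = μ * x (a, i) := by
    intro a b hab i
    have h := hrow a i
    rw [Fintype.sum_prod_type] at h
    have ha0 : ¬ ((a : ℕ) = 0) := by omega
    have hL : (∑ b' : Fin p, ∑ j : VechIdx d, ((Bc (a, i) (b', j) : ℝ) : ℂ) * x (b', j))
        = x (b, i) := by
      rw [Finset.sum_eq_single b]
      · have : ∀ j : VechIdx d, ((Bc (a, i) (b, j) : ℝ) : ℂ) * x (b, j)
            = (if i = j then 1 else 0) * x (b, j) := by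
          intro j
          rw [hBc a b i j, if_neg ha0, if_pos hab]
          split_ifs with hij <;> simp
        rw [Finset.sum_congr rfl (fun j _ => this j)]
        simp
      · intro b' _ hb'
        have hnab : ¬ ((a : ℕ) = (b' : ℕ) + 1) := by
          intro hh
          exact hb' (Fin.ext (by omega))
        refine Finset.sum_eq_zero fun j _ => ?_
        rw [hBc a b' i j, if_neg ha0, if_neg hnab]
        simp
      · simp
    rw [hL] at h
    exact h
  -- geometric structure of the eigenvector
  set pm1 : Fin p := ⟨p - 1, by omega⟩ with hpm1
  have hgeom : ∀ t : ℕ, ∀ ht : t < p, ∀ i : VechIdx d,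
      x (⟨p - 1 - t, by omega⟩, i) = μ ^ t * x (pm1, i) := by
    intro t
    induction t with
    | zero =>
      intro _ i
      have : (⟨p - 1 - 0, by omega⟩ : Fin p) = pm1 := rfl
      rw [this, pow_zero, one_mul]
    | succ t ih =>
      intro ht i
      have ht' : t < p := by omega
      have hab : ((⟨p - 1 - t, by omega⟩ : Fin p) : ℕ)
          = ((⟨p - 1 - (t + 1), by omega⟩ : Fin p) : ℕ) + 1 := by
        simp only []
        omega
      have hs := hshift ⟨p - 1 - t, by omega⟩ ⟨p - 1 - (t + 1), by omega⟩ hab i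
      rw [hs, ih ht' i]
      ring
  have hx_formula : ∀ (a : Fin p) (i : VechIdx d),
      x (a, i) = μ ^ (p - 1 - (a : ℕ)) * x (pm1, i) := by
    intro a i
    have ha : a = ⟨p - 1 - (p - 1 - (a : ℕ)), by omega⟩ := Fin.ext (by simp; omega)
    conv_lhs => rw [ha]
    exact hgeom (p - 1 - (a : ℕ)) (by omega) i
  set w : VechIdx d → ℂ := fun i => x (pm1, i) with hwdef
  have hw0 : w i₀ ≠ 0 := by
    intro h
    apply hxa
    rw [hx_formula a₀ i₀]
    have : x (pm1, i₀) = w i₀ := rfl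
    rw [this, h, mul_zero]
    simp
  -- row zero equation
  have hrow0 : ∀ i : VechIdx d,
      (∑ b : Fin p, μ ^ (p - 1 - (b : ℕ)) * (((B b).map Complex.ofReal) *ᵥ w) i)
        = μ ^ p * w i := by
    intro i
    have h := hrow ⟨0, hp⟩ i
    rw [Fintype.sum_prod_type] at h
    have hL : (∑ b : Fin p, ∑ j : VechIdx d, ((Bc ((⟨0, hp⟩ : Fin p), i) (b, j) : ℝ) : ℂ) * x (b, j))
        = ∑ b : Fin p, μ ^ (p - 1 - (b : ℕ)) * (((B b).map Complex.ofReal) *ᵥ w) i := by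
      refine Finset.sum_congr rfl fun b _ => ?_
      have hin : ∀ j : VechIdx d, ((Bc ((⟨0, hp⟩ : Fin p), i) (b, j) : ℝ) : ℂ) * x (b, j)
          = μ ^ (p - 1 - (b : ℕ)) * (((B b i j : ℝ) : ℂ) * w j) := by
        intro j
        rw [hBc ⟨0, hp⟩ b i j, if_pos rfl, hx_formula b j]
        have : x (pm1, j) = w j := rfl
        rw [this]; ring
      rw [Finset.sum_congr rfl (fun j _ => hin j), ← Finset.mul_sum]
      congr 1
    rw [hL] at h
    rw [h, hx_formula ⟨0, hp⟩ i]
    have : x (pm1, i) = w i := rfl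
    rw [this]
    have hpow : μ * μ ^ (p - 1 - 0) = μ ^ p := by
      rw [← pow_succ']
      congr 1
      omega
    rw [← mul_assoc, hpow]
  -- normalized coefficients
  set c : Fin p → ℂ := fun b => μ ^ (p - 1 - (b : ℕ)) * (μ ^ p)⁻¹ with hcdef
  have hμp : (μ : ℂ) ^ p ≠ 0 := pow_ne_zero _ hμ0
  have hc1 : ∀ b : Fin p, ‖c b‖ ≤ 1 := by
    intro b
    rw [hcdef]
    simp only [norm_mul, norm_inv, norm_pow]
    rw [← div_eq_mul_inv]
    have h1 : ‖μ‖ ^ (p - 1 - (b : ℕ)) ≤ ‖μ‖ ^ p :=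
      pow_le_pow_right₀ hcon (by omega)
    have h2 : (0 : ℝ) < ‖μ‖ ^ p := by positivity
    exact div_le_one_of_le₀ h1 h2.le
  have hwe : ∀ i : VechIdx d, w i = ∑ b, c b * (((B b).map Complex.ofReal) *ᵥ w) i := by
    intro i
    have h := hrow0 i
    have : w i = (μ ^ p)⁻¹ * (μ ^ p * w i) := by
      field_simp
    rw [this, ← h, Finset.mul_sum]
    refine Finset.sum_congr rfl fun b _ => ?_
    rw [hcdef]; ring
  -- complexified CP maps
  set Ac : (b : Fin p) → Fin (s b) → Matrix (Fin d) (Fin d) ℂ :=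
    fun b r => (Bbar b r).map Complex.ofReal with hAcdef
  set Φ : (b : Fin p) → Matrix (Fin d) (Fin d) ℂ → Matrix (Fin d) (Fin d) ℂ :=
    fun b M => ∑ r, Ac b r * M * (Ac b r)ᵀ with hΦdef
  have hHK' : ∀ D : Matrix (Fin d) (Fin d) ℝ, Dᵀ = D →
      CompAux.gvech D = H.mulVec (CompAux.gvec D)
        ∧ CompAux.gvec D = Kᵀ.mulVec (CompAux.gvech D) := hHK
  have hstep : ∀ (b : Fin p) (M : Matrix (Fin d) (Fin d) ℂ), Mᵀ = M →
      ((B b).map Complex.ofReal) *ᵥ CompAux.gvech M = CompAux.gvech (Φ b M) :=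
    fun b M hM => CompAux.step_vech hHK' (Bbar b) (B b) (hB b) M hM
  have hΦsym : ∀ (b : Fin p) (M : Matrix (Fin d) (Fin d) ℂ), Mᵀ = M → (Φ b M)ᵀ = Φ b M :=
    fun b M hM => CompAux.sym_conj_sum _ hM
  -- the symmetric matrix associated to w
  set Vc : Matrix (Fin d) (Fin d) ℂ := CompAux.symOf w with hVcdef
  have hVsym : Vcᵀ = Vc := CompAux.symOf_transpose w
  have hVvech : CompAux.gvech Vc = w := CompAux.gvech_symOf w
  have hVeq : Vc = ∑ b, c b • Φ b Vc := by
    have hRs : (∑ b, c b • Φ b Vc)ᵀ = ∑ b, c b • Φ b Vc := by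
      rw [Matrix.transpose_sum]
      exact Finset.sum_congr rfl fun b _ => by
        rw [Matrix.transpose_smul, hΦsym b Vc hVsym]
    refine CompAux.sym_ext hVsym hRs ?_
    funext q
    rw [hVvech]
    have h1 : CompAux.gvech (∑ b, c b • Φ b Vc) q = ∑ b, c b * CompAux.gvech (Φ b Vc) q := by
      simp [CompAux.gvech, Matrix.sum_apply, Matrix.smul_apply, smul_eq_mul]
    rw [h1]
    have h2 : ∀ b : Fin p, CompAux.gvech (Φ b Vc) q = (((B b).map Complex.ofReal) *ᵥ w) q := by
      intro b
      rw [← hstep b Vc hVsym, hVvech]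
    rw [Finset.sum_congr rfl (fun b _ => by rw [h2 b])]
    exact hwe q
  -- the comparison sequence
  set α : ℝ := ∑ i : Fin d, ∑ j : Fin d, ‖Vc i j‖ with hαdef
  have hα0 : (0:ℝ) ≤ α :=
    Finset.sum_nonneg fun _ _ => Finset.sum_nonneg fun _ _ => norm_nonneg _
  set Ψ : Matrix (Fin d) (Fin d) ℂ → Matrix (Fin d) (Fin d) ℂ := fun M => ∑ b, Φ b M with hΨdef
  set Tc : ℕ → Matrix (Fin d) (Fin d) ℂ := fun k => Ψ^[k] ((α : ℂ) • 1) with hTcdef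
  have hT0 : Tc 0 = (α : ℂ) • 1 := rfl
  have hTsucc : ∀ k, Tc (k + 1) = Ψ (Tc k) := fun k => Function.iterate_succ_apply' Ψ k _
  have hTsym : ∀ k, (Tc k)ᵀ = Tc k := by
    intro k
    induction k with
    | zero => rw [hT0, Matrix.transpose_smul, Matrix.transpose_one]
    | succ k ih =>
      rw [hTsucc, hΨdef]
      simp only []
      rw [Matrix.transpose_sum]
      exact Finset.sum_congr rfl fun b _ => hΦsym b _ ih
  set Sc : Matrix (VechIdx d) (VechIdx d) ℂ := (∑ j, B j).map Complex.ofReal with hScdef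
  set v0 : VechIdx d → ℂ := CompAux.gvech (Tc 0) with hv0def
  have hTvech : ∀ k, CompAux.gvech (Tc k) = (Sc ^ k) *ᵥ v0 := by
    intro k
    induction k with
    | zero => rw [pow_zero, Matrix.one_mulVec, hv0def]
    | succ k ih =>
      rw [hTsucc]
      have h1 : CompAux.gvech (Ψ (Tc k)) = ∑ b, CompAux.gvech (Φ b (Tc k)) := by
        funext q
        simp [hΨdef, CompAux.gvech, Matrix.sum_apply]
      rw [h1]
      have h2 : (∑ b, CompAux.gvech (Φ b (Tc k)) : VechIdx d → ℂ)
          = ∑ b, ((B b).map Complex.ofReal) *ᵥ CompAux.gvech (Tc k) :=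
        Finset.sum_congr rfl fun b _ => (hstep b _ (hTsym k)).symm
      rw [h2, ← CompAux.sum_mulVec', ← CompAux.mapC_sum, ← hScdef, ih,
        Matrix.mulVec_mulVec, ← pow_succ']
  -- the quadratic forms
  set q : ℕ → (Fin d → ℂ) → ℝ := fun k z => (star z ⬝ᵥ (Tc k *ᵥ z)).re with hqdef
  have hq0 : ∀ z : Fin d → ℂ, q 0 z = α * ∑ i, ‖z i‖ ^ 2 := by
    intro z
    rw [hqdef]
    simp only [hT0, Matrix.smul_mulVec, Matrix.one_mulVec]
    rw [dotProduct_smul]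
    have : (star z ⬝ᵥ z) = ∑ i, star (z i) * z i := by
      simp [dotProduct]
    rw [this]
    simp only [smul_eq_mul]
    rw [Complex.re_ofReal_mul]
    congr 1
    rw [Complex.re_sum]
    refine Finset.sum_congr rfl fun i _ => ?_
    have : star (z i) * z i = ((‖z i‖ : ℂ)) ^ 2 := by
      rw [Complex.star_def, Complex.conj_mul']
    rw [this]
    norm_cast
  have hqstep : ∀ (k : ℕ) (z : Fin d → ℂ),
      q (k + 1) z = ∑ b, ∑ r, q k ((Ac b r)ᵀ *ᵥ z) := by
    intro k z
    rw [hqdef]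
    simp only []
    rw [hTsucc, hΨdef]
    simp only []
    have hΦexp : (∑ b, Φ b (Tc k)) = ∑ b, ∑ r, Ac b r * Tc k * (Ac b r)ᵀ := rfl
    rw [hΦexp, CompAux.sum_mulVec', dotProduct_sum']
    rw [Complex.re_sum]
    refine Finset.sum_congr rfl fun b _ => ?_
    rw [CompAux.sum_mulVec', dotProduct_sum', Complex.re_sum]
    refine Finset.sum_congr rfl fun r _ => ?_
    congr 1
    exact CompAux.dot_conj (Bbar b r) (Tc k) z z
  -- entrywise bound for `Tc`
  have hTentry : ∀ (k : ℕ) (i j : Fin d), ‖Tc k i j‖ ≤ ‖Sc ^ k‖ * ‖v0‖ := by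
    intro k i j
    have hvechnorm : ∀ qq : VechIdx d, ‖CompAux.gvech (Tc k) qq‖ ≤ ‖Sc ^ k‖ * ‖v0‖ := by
      intro qq
      calc ‖CompAux.gvech (Tc k) qq‖ ≤ ‖CompAux.gvech (Tc k)‖ := norm_le_pi_norm _ qq
      _ = ‖(Sc ^ k) *ᵥ v0‖ := by rw [hTvech k]
      _ ≤ ‖Sc ^ k‖ * ‖v0‖ := Matrix.linfty_opNorm_mulVec _ _
    rcases le_total j i with hj | hj
    · exact hvechnorm ⟨(i, j), hj⟩
    · have h2 : Tc k i j = Tc k j i := by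
        have h3 := congrFun (congrFun (hTsym k) i) j
        rw [Matrix.transpose_apply] at h3
        exact h3.symm
      rw [h2]
      exact hvechnorm ⟨(j, i), hj⟩
  -- bound on the quadratic form
  have hqbound : ∀ (k : ℕ) (z : Fin d → ℂ),
      q k z ≤ (∑ i, ∑ j, ‖z i‖ * ‖z j‖) * (‖Sc ^ k‖ * ‖v0‖) := by
    intro k z
    rw [hqdef]
    simp only []
    have h1 : (star z ⬝ᵥ (Tc k *ᵥ z)).re ≤ ‖star z ⬝ᵥ (Tc k *ᵥ z)‖ := Complex.re_le_norm _
    refine h1.trans ?_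
    have h2 : ‖star z ⬝ᵥ (Tc k *ᵥ z)‖ ≤ ∑ i, ∑ j, ‖z i‖ * ‖Tc k i j‖ * ‖z j‖ := by
      calc ‖star z ⬝ᵥ (Tc k *ᵥ z)‖ = ‖∑ i, star (z i) * ∑ j, Tc k i j * z j‖ := by
            simp [dotProduct, Matrix.mulVec]
      _ ≤ ∑ i, ‖star (z i) * ∑ j, Tc k i j * z j‖ := norm_sum_le _ _
      _ ≤ ∑ i, ∑ j, ‖z i‖ * ‖Tc k i j‖ * ‖z j‖ := by
          refine Finset.sum_le_sum fun i _ => ?_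
          rw [norm_mul, norm_star]
          calc ‖z i‖ * ‖∑ j, Tc k i j * z j‖ ≤ ‖z i‖ * ∑ j, ‖Tc k i j * z j‖ :=
                mul_le_mul_of_nonneg_left (norm_sum_le _ _) (norm_nonneg _)
          _ = ∑ j, ‖z i‖ * ‖Tc k i j‖ * ‖z j‖ := by
                rw [Finset.mul_sum]
                refine Finset.sum_congr rfl fun j _ => ?_
                rw [norm_mul]
                ring
    refine h2.trans ?_
    rw [Finset.sum_mul]
    refine Finset.sum_le_sum fun i _ => ?_
    rw [Finset.sum_mul]
    refine Finset.sum_le_sum fun j _ => ?_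
    have h3 := hTentry k i j
    nlinarith [norm_nonneg (z i), norm_nonneg (z j), norm_nonneg (Tc k i j),
      mul_nonneg (norm_nonneg (z i)) (norm_nonneg (z j))]
  -- the central inductive inequality
  have hG : ∀ (k : ℕ) (xx yy : Fin d → ℂ),
      2 * ‖star xx ⬝ᵥ (Vc *ᵥ yy)‖ ≤ q k xx + q k yy := by
    intro k
    induction k with
    | zero =>
      intro xx yy
      rw [hq0, hq0]
      have hb : ‖star xx ⬝ᵥ (Vc *ᵥ yy)‖ ≤ ∑ i, ∑ j, ‖Vc i j‖ * (‖xx i‖ * ‖yy j‖) := by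
        calc ‖star xx ⬝ᵥ (Vc *ᵥ yy)‖ = ‖∑ i, star (xx i) * ∑ j, Vc i j * yy j‖ := by
              simp [dotProduct, Matrix.mulVec]
        _ ≤ ∑ i, ‖star (xx i) * ∑ j, Vc i j * yy j‖ := norm_sum_le _ _
        _ ≤ ∑ i, ∑ j, ‖Vc i j‖ * (‖xx i‖ * ‖yy j‖) := by
            refine Finset.sum_le_sum fun i _ => ?_
            rw [norm_mul, norm_star]
            calc ‖xx i‖ * ‖∑ j, Vc i j * yy j‖ ≤ ‖xx i‖ * ∑ j, ‖Vc i j * yy j‖ :=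
                  mul_le_mul_of_nonneg_left (norm_sum_le _ _) (norm_nonneg _)
            _ = ∑ j, ‖Vc i j‖ * (‖xx i‖ * ‖yy j‖) := by
                  rw [Finset.mul_sum]
                  refine Finset.sum_congr rfl fun j _ => ?_
                  rw [norm_mul]
                  ring
      have hstep2 : ∑ i, ∑ j, ‖Vc i j‖ * (2 * (‖xx i‖ * ‖yy j‖))
          ≤ ∑ i, ∑ j, ‖Vc i j‖ * ((∑ l, ‖xx l‖ ^ 2) + ∑ l, ‖yy l‖ ^ 2) := by
        refine Finset.sum_le_sum fun i _ => Finset.sum_le_sum fun j _ => ?_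
        refine mul_le_mul_of_nonneg_left ?_ (norm_nonneg _)
        have h4 : 2 * (‖xx i‖ * ‖yy j‖) ≤ ‖xx i‖ ^ 2 + ‖yy j‖ ^ 2 := by
          nlinarith [sq_nonneg (‖xx i‖ - ‖yy j‖)]
        have h5 : ‖xx i‖ ^ 2 ≤ ∑ l, ‖xx l‖ ^ 2 :=
          Finset.single_le_sum (f := fun l => ‖xx l‖ ^ 2) (fun l _ => sq_nonneg _)
            (Finset.mem_univ i)
        have h6 : ‖yy j‖ ^ 2 ≤ ∑ l, ‖yy l‖ ^ 2 :=
          Finset.single_le_sum (f := fun l => ‖yy l‖ ^ 2) (fun l _ => sq_nonneg _)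
            (Finset.mem_univ j)
        linarith
      have hgen : ∀ CC : ℝ, ∑ i, ∑ j, ‖Vc i j‖ * CC = α * CC := by
        intro CC
        rw [hαdef, Finset.sum_mul]
        refine Finset.sum_congr rfl fun i _ => ?_
        rw [Finset.sum_mul]
      have hconst : ∑ i, ∑ j, ‖Vc i j‖ * ((∑ l, ‖xx l‖ ^ 2) + ∑ l, ‖yy l‖ ^ 2)
          = α * (∑ l, ‖xx l‖ ^ 2) + α * (∑ l, ‖yy l‖ ^ 2) := by
        rw [hgen, mul_add]
      have h7 : 2 * ‖star xx ⬝ᵥ (Vc *ᵥ yy)‖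
          ≤ ∑ i, ∑ j, ‖Vc i j‖ * (2 * (‖xx i‖ * ‖yy j‖)) := by
        have := mul_le_mul_of_nonneg_left hb (by norm_num : (0:ℝ) ≤ 2)
        calc 2 * ‖star xx ⬝ᵥ (Vc *ᵥ yy)‖
            ≤ 2 * ∑ i, ∑ j, ‖Vc i j‖ * (‖xx i‖ * ‖yy j‖) := this
        _ = ∑ i, ∑ j, ‖Vc i j‖ * (2 * (‖xx i‖ * ‖yy j‖)) := by
            rw [Finset.mul_sum]
            refine Finset.sum_congr rfl fun i _ => ?_
            rw [Finset.mul_sum]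
            refine Finset.sum_congr rfl fun j _ => ?_
            ring
      linarith [h7, hstep2, hconst.le, hconst.ge]
    | succ k ih =>
      intro xx yy
      have hkey : star xx ⬝ᵥ (Vc *ᵥ yy)
          = ∑ b, c b * ∑ r, (star ((Ac b r)ᵀ *ᵥ xx) ⬝ᵥ (Vc *ᵥ ((Ac b r)ᵀ *ᵥ yy))) := by
        conv_lhs => rw [hVeq]
        rw [CompAux.sum_mulVec', dotProduct_sum']
        refine Finset.sum_congr rfl fun b _ => ?_
        rw [Matrix.smul_mulVec, dotProduct_smul, smul_eq_mul]
        congr 1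
        have hΦb : Φ b Vc = ∑ r, Ac b r * Vc * (Ac b r)ᵀ := rfl
        rw [hΦb, CompAux.sum_mulVec', dotProduct_sum']
        exact Finset.sum_congr rfl fun r _ => CompAux.dot_conj (Bbar b r) Vc xx yy
      rw [hkey, hqstep, hqstep]
      have hb1 : ‖∑ b, c b * ∑ r, (star ((Ac b r)ᵀ *ᵥ xx) ⬝ᵥ (Vc *ᵥ ((Ac b r)ᵀ *ᵥ yy)))‖
          ≤ ∑ b, ∑ r, ‖star ((Ac b r)ᵀ *ᵥ xx) ⬝ᵥ (Vc *ᵥ ((Ac b r)ᵀ *ᵥ yy))‖ := by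
        calc ‖∑ b, c b * ∑ r, (star ((Ac b r)ᵀ *ᵥ xx) ⬝ᵥ (Vc *ᵥ ((Ac b r)ᵀ *ᵥ yy)))‖
            ≤ ∑ b, ‖c b * ∑ r, (star ((Ac b r)ᵀ *ᵥ xx) ⬝ᵥ (Vc *ᵥ ((Ac b r)ᵀ *ᵥ yy)))‖ :=
              norm_sum_le _ _
        _ ≤ ∑ b, ∑ r, ‖star ((Ac b r)ᵀ *ᵥ xx) ⬝ᵥ (Vc *ᵥ ((Ac b r)ᵀ *ᵥ yy))‖ := by
            refine Finset.sum_le_sum fun b _ => ?_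
            rw [norm_mul]
            calc ‖c b‖ * ‖∑ r, (star ((Ac b r)ᵀ *ᵥ xx) ⬝ᵥ (Vc *ᵥ ((Ac b r)ᵀ *ᵥ yy)))‖
                ≤ 1 * ‖∑ r, (star ((Ac b r)ᵀ *ᵥ xx) ⬝ᵥ (Vc *ᵥ ((Ac b r)ᵀ *ᵥ yy)))‖ :=
                  mul_le_mul_of_nonneg_right (hc1 b) (norm_nonneg _)
            _ = ‖∑ r, (star ((Ac b r)ᵀ *ᵥ xx) ⬝ᵥ (Vc *ᵥ ((Ac b r)ᵀ *ᵥ yy)))‖ := one_mul _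
            _ ≤ ∑ r, ‖star ((Ac b r)ᵀ *ᵥ xx) ⬝ᵥ (Vc *ᵥ ((Ac b r)ᵀ *ᵥ yy))‖ := norm_sum_le _ _
      have hb2 : ∑ b, ∑ r, (2 : ℝ) * ‖star ((Ac b r)ᵀ *ᵥ xx) ⬝ᵥ (Vc *ᵥ ((Ac b r)ᵀ *ᵥ yy))‖
          ≤ ∑ b, ∑ r, (q k ((Ac b r)ᵀ *ᵥ xx) + q k ((Ac b r)ᵀ *ᵥ yy)) :=
        Finset.sum_le_sum fun b _ => Finset.sum_le_sum fun r _ => ih _ _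
      have hsplit : ∑ b, ∑ r, (q k ((Ac b r)ᵀ *ᵥ xx) + q k ((Ac b r)ᵀ *ᵥ yy))
          = (∑ b, ∑ r, q k ((Ac b r)ᵀ *ᵥ xx)) + ∑ b, ∑ r, q k ((Ac b r)ᵀ *ᵥ yy) := by
        rw [← Finset.sum_add_distrib]
        refine Finset.sum_congr rfl fun b _ => ?_
        rw [← Finset.sum_add_distrib]
      have h8 : (2:ℝ) * ∑ b, ∑ r, ‖star ((Ac b r)ᵀ *ᵥ xx) ⬝ᵥ (Vc *ᵥ ((Ac b r)ᵀ *ᵥ yy))‖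
          = ∑ b, ∑ r, (2:ℝ) * ‖star ((Ac b r)ᵀ *ᵥ xx) ⬝ᵥ (Vc *ᵥ ((Ac b r)ᵀ *ᵥ yy))‖ := by
        rw [Finset.mul_sum]
        refine Finset.sum_congr rfl fun b _ => ?_
        rw [Finset.mul_sum]
      have h9 := mul_le_mul_of_nonneg_left hb1 (by norm_num : (0:ℝ) ≤ 2)
      rw [h8] at h9
      calc 2 * ‖∑ b, c b * ∑ r, (star ((Ac b r)ᵀ *ᵥ xx) ⬝ᵥ (Vc *ᵥ ((Ac b r)ᵀ *ᵥ yy)))‖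
          ≤ ∑ b, ∑ r, (2:ℝ) * ‖star ((Ac b r)ᵀ *ᵥ xx) ⬝ᵥ (Vc *ᵥ ((Ac b r)ᵀ *ᵥ yy))‖ := h9
      _ ≤ ∑ b, ∑ r, (q k ((Ac b r)ᵀ *ᵥ xx) + q k ((Ac b r)ᵀ *ᵥ yy)) := hb2
      _ = _ := hsplit
  -- pass to the limit
  have hlim : ∀ xx yy : Fin d → ℂ, star xx ⬝ᵥ (Vc *ᵥ yy) = 0 := by
    intro xx yy
    set Cx : ℝ := ∑ i, ∑ j, ‖xx i‖ * ‖xx j‖ with hCx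
    set Cy : ℝ := ∑ i, ∑ j, ‖yy i‖ * ‖yy j‖ with hCy
    have hbound : ∀ k : ℕ, 2 * ‖star xx ⬝ᵥ (Vc *ᵥ yy)‖
        ≤ (Cx + Cy) * (‖Sc ^ k‖ * ‖v0‖) := by
      intro k
      calc 2 * ‖star xx ⬝ᵥ (Vc *ᵥ yy)‖ ≤ q k xx + q k yy := hG k xx yy
      _ ≤ Cx * (‖Sc ^ k‖ * ‖v0‖) + Cy * (‖Sc ^ k‖ * ‖v0‖) :=
          add_le_add (hqbound k xx) (hqbound k yy)
      _ = (Cx + Cy) * (‖Sc ^ k‖ * ‖v0‖) := by ring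
    have h0 : Tendsto (fun k : ℕ => ‖Sc ^ k‖) atTop (𝓝 0) :=
      CompAux.pow_norm_tendsto_zero Sc hspec
    have htend : Tendsto (fun k : ℕ => (Cx + Cy) * (‖Sc ^ k‖ * ‖v0‖)) atTop (𝓝 0) := by
      have h1 : Tendsto (fun k : ℕ => (Cx + Cy) * (‖Sc ^ k‖ * ‖v0‖)) atTop
          (𝓝 ((Cx + Cy) * (0 * ‖v0‖))) := ((h0.mul_const ‖v0‖).const_mul (Cx + Cy))
      simpa using h1
    have h2 : 2 * ‖star xx ⬝ᵥ (Vc *ᵥ yy)‖ ≤ 0 := ge_of_tendsto' htend hbound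
    have h3 := norm_nonneg (star xx ⬝ᵥ (Vc *ᵥ yy))
    have h4 : ‖star xx ⬝ᵥ (Vc *ᵥ yy)‖ = 0 := by linarith
    exact norm_eq_zero.mp h4
  -- conclude `Vc = 0`, contradiction
  have hVzero : ∀ i j, Vc i j = 0 := by
    intro i j
    have h := hlim (Pi.single i 1) (Pi.single j 1)
    have h1 : (Vc *ᵥ Pi.single j (1:ℂ)) = fun k => Vc k j := by
      funext k
      rw [Matrix.mulVec_single]
      simp
    rw [h1] at h
    have h2 : star (Pi.single i (1:ℂ)) ⬝ᵥ (fun k => Vc k j) = Vc i j := by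
      simp only [dotProduct, Pi.star_apply]
      rw [Finset.sum_eq_single i]
      · simp
      · intro k _ hk
        rw [Pi.single_eq_of_ne hk]
        simp
      · simp
    rw [h2] at h
    exact h
  apply hw0
  rw [← hVvech]
  exact hVzero i₀.1.1 i₀.1.2
end
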